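/- Let (Ω, 𝓕, P) be a probability space carrying: (i) independent, identically distributed random variables (X_n)_{n∈ℕ} with X_n ≥ 0 almost surely and E[log(1 + X_0)] < ∞; and (ii) independent, identically distributed random variables (T_n)_{n∈ℕ}, each with the exponential distribution of rate μ > 0 (law with density μ e^{−μ t} on [0,∞)), such that the whole family (X_n)_n ∪ (T_n)_n is independent. Set S_n = ∑_{j<n} T_j. Then for every c > 0, almost surely the series ∑_{n} X_n * exp(−c * S_n) converges (has finite sum). -/

import Mathlib

open MeasureTheory ProbabilityTheory Filter BigOperators Topology

/-- Almost sure finiteness of the exponentially discounted compound Poisson series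
`∑_n X_n e^{-c S_n}` of Proposition 3.4 of the paper: the `X_n` are i.i.d. nonnegative
with finite log-moment, the `T_n` are i.i.d. exponential of rate `μ > 0`, the whole
family is independent, `S_n = ∑_{j<n} T_j`, and `c > 0`. -/
theorem summable_discounted_series_of_iid
    {Ω : Type*} [MeasurableSpace Ω] (P : Measure Ω) [IsProbabilityMeasure P]
    (X T : ℕ → Ω → ℝ) (μ c : ℝ) (hμ : 0 < μ) (hc : 0 < c)
    (hmeasX : ∀ n, Measurable (X n)) (hmeasT : ∀ n, Measurable (T n))
    (hindep : iIndepFun (Sum.elim X T) P)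
    (hidentX : ∀ n, IdentDistrib (X n) (X 0) P P)
    (hnn : ∀ n, ∀ᵐ ω ∂P, 0 ≤ X n ω)
    (hint : Integrable (fun ω => Real.log (1 + X 0 ω)) P)
    (hT : ∀ n, P.map (T n) = expMeasure μ) :
    ∀ᵐ ω ∂P,
      Summable (fun n : ℕ =>
        X n ω * Real.exp (-c * ∑ j ∈ Finset.range n, T j ω)) := by
  classical
  -- The exponential law charges only `(0, ∞)`.
  have hexp0 : expMeasure μ (Set.Iic 0) = 0 := by
    have hIio : expMeasure μ (Set.Iio 0) = 0 := by
      rw [expMeasure, gammaMeasure, withDensity_apply _ measurableSet_Iio]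
      exact lintegral_gammaPDF_of_nonpos le_rfl
    have hsing : expMeasure μ {(0 : ℝ)} = 0 := by
      rw [expMeasure, gammaMeasure]
      exact withDensity_absolutelyContinuous _ _ (by simp)
    have hsub : Set.Iic (0 : ℝ) ⊆ Set.Iio 0 ∪ {0} := by
      intro x hx
      rcases lt_or_eq_of_le (Set.mem_Iic.1 hx) with h | h
      · exact Or.inl h
      · exact Or.inr (by simp [h])
    have h2 : expMeasure μ (Set.Iic 0) ≤ expMeasure μ (Set.Iio 0) + expMeasure μ {0} :=
      (measure_mono hsub).trans (measure_union_le _ _)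
    simpa [hIio, hsing] using h2
  have hTpos : ∀ n, ∀ᵐ ω ∂P, 0 < T n ω := by
    intro n
    rw [ae_iff]
    have hset : {ω | ¬ 0 < T n ω} = T n ⁻¹' Set.Iic 0 := by
      ext ω; simp [not_lt]
    rw [hset, ← Measure.map_apply (hmeasT n) measurableSet_Iic, hT n, hexp0]
  set Y : ℕ → Ω → ℝ := fun n ω => Real.log (1 + X n ω) with hYdef
  set Z : ℕ → Ω → ℝ := fun n ω => min (T n ω) 1 with hZdef
  have hlog : Measurable fun x : ℝ => Real.log (1 + x) :=
    Real.measurable_log.comp (measurable_const.add measurable_id)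
  have hmin : Measurable fun x : ℝ => min x 1 := measurable_id.min measurable_const
  -- pairwise independence of the `Y` family
  have hYindep : Pairwise (Function.onFun (IndepFun · · P) Y) := by
    intro i j hij
    have h := hindep.indepFun (i := Sum.inl i) (j := Sum.inl j) (by simpa using hij)
    exact h.comp hlog hlog
  have hYident : ∀ n, IdentDistrib (Y n) (Y 0) P P := fun n => (hidentX n).comp hlog
  have hYint : Integrable (Y 0) P := hint
  -- pairwise independence of the `Z` family
  have hZindep : Pairwise (Function.onFun (IndepFun · · P) Z) := by
    intro i j hij
    have h := hindep.indepFun (i := Sum.inr i) (j := Sum.inr j) (by simpa using hij)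
    exact h.comp hmin hmin
  have hTident : ∀ n, IdentDistrib (T n) (T 0) P P := fun n =>
    ⟨(hmeasT n).aemeasurable, (hmeasT 0).aemeasurable, (hT n).trans (hT 0).symm⟩
  have hZident : ∀ n, IdentDistrib (Z n) (Z 0) P P := fun n => (hTident n).comp hmin
  have hZint : Integrable (Z 0) P := by
    refine (integrable_const (1 : ℝ)).mono'
      ((hmeasT 0).min measurable_const).aestronglyMeasurable ?_
    filter_upwards [hTpos 0] with ω hω
    rw [Real.norm_eq_abs, abs_le]
    refine ⟨?_, min_le_right _ _⟩
    have := lt_min hω (one_pos : (0:ℝ) < 1)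
    linarith
  have hZpos : 0 < P[Z 0] := by
    have hzn : 0 ≤ᵐ[P] Z 0 := by
      filter_upwards [hTpos 0] with ω hω
      exact le_of_lt (lt_min hω one_pos)
    rw [integral_pos_iff_support_of_nonneg_ae hzn hZint]
    by_contra h
    push_neg at h
    have h0 : P (Function.support (Z 0)) = 0 := le_antisymm h zero_le
    have hz : ∀ᵐ ω ∂P, Z 0 ω = 0 := by
      rw [ae_iff]
      exact h0
    obtain ⟨ω, h1, h2⟩ := ((hTpos 0).and hz).exists
    have : (0:ℝ) < Z 0 ω := lt_min h1 one_pos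
    rw [h2] at this
    exact lt_irrefl _ this
  -- strong law of large numbers for both families
  have hYlln := strong_law_ae_real Y hYint hYindep hYident
  have hZlln := strong_law_ae_real Z hZint hZindep hZident
  filter_upwards [hYlln, hZlln, ae_all_iff.2 hnn] with ω hYa hZa hXnn
  set B : ℕ → ℝ := fun n => ∑ i ∈ Finset.range n, Y i ω with hBdef
  -- `Y n ω / n → 0`
  have hB1 : Tendsto (fun n : ℕ => B (n + 1) / ((n : ℝ) + 1)) atTop (𝓝 (P[Y 0])) := by
    have := hYa.comp (tendsto_add_atTop_nat 1)
    simpa [Function.comp_def] using this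
  have hrat : Tendsto (fun n : ℕ => ((n : ℝ) + 1) / n) atTop (𝓝 1) := by
    have h1 : Tendsto (fun n : ℕ => 1 + 1 / (n : ℝ)) atTop (𝓝 (1 + 0)) :=
      tendsto_const_nhds.add tendsto_one_div_atTop_nhds_zero_nat
    rw [add_zero] at h1
    refine h1.congr' ?_
    filter_upwards [eventually_ge_atTop 1] with n hn
    have hne : (n : ℝ) ≠ 0 := Nat.cast_ne_zero.2 (by omega)
    field_simp
  have hY0 : Tendsto (fun n : ℕ => Y n ω / n) atTop (𝓝 0) := by
    have ht : Tendsto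
        (fun n : ℕ => B (n + 1) / ((n : ℝ) + 1) * (((n : ℝ) + 1) / n) - B n / n)
        atTop (𝓝 (P[Y 0] * 1 - P[Y 0])) := (hB1.mul hrat).sub hYa
    have heq : P[Y 0] * 1 - P[Y 0] = 0 := by ring
    rw [heq] at ht
    refine ht.congr' ?_
    filter_upwards [eventually_ge_atTop 1] with n hn
    have hne : (n : ℝ) ≠ 0 := Nat.cast_ne_zero.2 (by omega)
    have hne1 : (n : ℝ) + 1 ≠ 0 := by positivity
    have hs : B (n + 1) = B n + Y n ω := Finset.sum_range_succ _ _
    rw [hs]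
    field_simp
    try ring
  -- combined limit of the exponent divided by n
  have hcomb : Tendsto
      (fun n : ℕ => Y n ω / n - c * ((∑ i ∈ Finset.range n, Z i ω) / n))
      atTop (𝓝 (0 - c * P[Z 0])) := hY0.sub (hZa.const_mul c)
  have hlt : 0 - c * P[Z 0] < -(c * P[Z 0]) / 2 := by nlinarith [mul_pos hc hZpos]
  have hev := hcomb.eventually_lt_const hlt
  obtain ⟨N, hN⟩ := (hev.and (eventually_ge_atTop 1)).exists_forall_of_atTop
  -- comparison with a geometric series
  have hgeom : Summable (fun n : ℕ => Real.exp ((n : ℝ) * (-(c * P[Z 0]) / 2))) :=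
    Real.summable_exp_nat_mul_iff.2 (by nlinarith [mul_pos hc hZpos])
  rw [← summable_nat_add_iff N]
  refine Summable.of_nonneg_of_le
    (fun n => mul_nonneg (hXnn _) (Real.exp_nonneg _)) (fun n => ?_)
    ((summable_nat_add_iff N).2 hgeom)
  set m := n + N with hm
  obtain ⟨hm1, hm2⟩ := hN m (Nat.le_add_left N n)
  have hmpos : (0 : ℝ) < m := by exact_mod_cast Nat.lt_of_lt_of_le Nat.zero_lt_one hm2
  set SZ : ℝ := ∑ i ∈ Finset.range m, Z i ω with hSZdef
  have hdiv : (Y m ω - c * SZ) / m < -(c * P[Z 0]) / 2 := by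
    rw [sub_div, mul_div_assoc]
    exact hm1
  have hkey : Y m ω - c * SZ < -(c * P[Z 0]) / 2 * m := (div_lt_iff₀ hmpos).1 hdiv
  have hSle : SZ ≤ ∑ j ∈ Finset.range m, T j ω :=
    Finset.sum_le_sum fun j _ => min_le_left _ _
  have h1 : X m ω ≤ Real.exp (Y m ω) := by
    have hx : (0 : ℝ) < 1 + X m ω := by linarith [hXnn m]
    rw [hYdef]
    rw [Real.exp_log hx]
    linarith
  calc X m ω * Real.exp (-c * ∑ j ∈ Finset.range m, T j ω)
      ≤ Real.exp (Y m ω) * Real.exp (-c * ∑ j ∈ Finset.range m, T j ω) :=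
        mul_le_mul_of_nonneg_right h1 (Real.exp_nonneg _)
    _ = Real.exp (Y m ω + -c * ∑ j ∈ Finset.range m, T j ω) := (Real.exp_add _ _).symm
    _ ≤ Real.exp ((m : ℝ) * (-(c * P[Z 0]) / 2)) := by
        apply Real.exp_le_exp.2
        have : -c * ∑ j ∈ Finset.range m, T j ω ≤ -c * SZ := by nlinarith
        nlinarith
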